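/- Define c(n) = 0 if n ≡ 0 (mod 4), c(n) = 1 if n ≡ 1 (mod 4), and c(n) = 2 if n ≡ 2 or 3 (mod 4). Then for all n ≥ 1, the independence number of G_n satisfies α(G_n) ≥ 4n − 4c(n). -/

import Mathlib

/-- The vertex set of the graph `G_n`: vectors in `{-1,0,1}^n` with exactly three
nonzero coordinates. -/
def Gvert (n : ℕ) : Type :=
  {v : Fin n → ℤ // (∀ i, v i = -1 ∨ v i = 0 ∨ v i = 1) ∧
    (Finset.univ.filter (fun i => v i ≠ 0)).card = 3}

/-- The graph `G_n`: two such vectors are adjacent iff their scalar product is `1`. -/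
def G (n : ℕ) : SimpleGraph (Gvert n) where
  Adj u v := u ≠ v ∧ ∑ i, u.1 i * v.1 i = 1
  symm := ⟨by
    rintro u v ⟨h1, h2⟩
    exact ⟨h1.symm, (Finset.sum_congr rfl fun i _ => mul_comm _ _).trans h2⟩⟩
  loopless := ⟨by rintro u ⟨h1, -⟩; exact h1 rfl⟩

/-- A set of vertices is independent if no two of its members are adjacent. -/
def IsIndep {V : Type*} (H : SimpleGraph V) (s : Set V) : Prop :=
  s.Pairwise fun u v => ¬ H.Adj u v

/-- The constant `c(n)` from the paper. -/
def c (n : ℕ) : ℕ := if n % 4 = 0 then 0 else if n % 4 = 1 then 1 else 2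

instance (n : ℕ) : DecidableEq (Gvert n) := by unfold Gvert; infer_instance

def sg (x : Bool) : ℤ := if x then 1 else -1

def w (z : Fin 4) (a b : Bool) (j : ℕ) : ℤ :=
  match z.val, j with
  | 0, 1 => sg a
  | 0, 2 => sg b
  | 0, 3 => sg a * sg b
  | 1, 0 => sg a
  | 1, 2 => sg b
  | 1, 3 => sg a * sg b
  | 2, 0 => sg a
  | 2, 1 => sg b
  | 2, 3 => sg a * sg b
  | 3, 0 => sg a
  | 3, 1 => sg b
  | 3, 2 => sg a * sg b
  | _, _ => 0

lemma w_ge4 (z : Fin 4) (a b : Bool) (j : ℕ) (hj : 4 ≤ j) : w z a b j = 0 := by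
  obtain ⟨j, rfl⟩ : ∃ j', j = j' + 4 := ⟨j - 4, by omega⟩
  rcases z with ⟨zv, hz⟩
  interval_cases zv <;> rfl

lemma wrange (z : Fin 4) (a b : Bool) (j : ℕ) :
    w z a b j = -1 ∨ w z a b j = 0 ∨ w z a b j = 1 := by
  by_cases hj : j < 4
  · interval_cases j <;> revert z a b <;> decide
  · right; left; exact w_ge4 z a b j (by omega)

lemma wsupp (z : Fin 4) (a b : Bool) :
    (∑ j ∈ Finset.range 4, (if w z a b j ≠ 0 then 1 else 0 : ℕ)) = 3 := by
  revert z a b; decide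

lemma wdot (z z' : Fin 4) (a b a' b' : Bool) :
    (∑ j ∈ Finset.range 4, w z a b j * w z' a' b' j) ≠ 1 := by
  revert z z' a b a' b'; decide

lemma winj (z z' : Fin 4) (a b a' b' : Bool)
    (h0 : w z a b 0 = w z' a' b' 0) (h1 : w z a b 1 = w z' a' b' 1)
    (h2 : w z a b 2 = w z' a' b' 2) : z = z' ∧ a = a' ∧ b = b' := by
  revert z z' a b a' b'; decide

lemma wnz (z : Fin 4) (a b : Bool) : w z a b 0 ≠ 0 ∨ w z a b 1 ≠ 0 := by
  revert z a b; decide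

lemma w330 (a b : Bool) : w 3 a b 3 = 0 := by revert a b; decide

/-- Sum of a function supported on the `k`-th block of four coordinates. -/
lemma sum_block {M : Type*} [AddCommMonoid M] (n k : ℕ) (F : ℕ → M)
    (hF : ∀ j, 4 ≤ j → F j = 0)
    (h1 : 4 * k + 3 ≤ n)
    (h2 : 4 * k + 4 ≤ n ∨ (n = 4 * k + 3 ∧ F 3 = 0)) :
    ∑ i ∈ Finset.range n, (if i / 4 = k then F (i % 4) else 0)
      = ∑ j ∈ Finset.range 4, F j := by
  set m := min n (4 * k + 4) with hm
  have e1 : ∑ i ∈ Finset.range n, (if i / 4 = k then F (i % 4) else 0)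
      = ∑ i ∈ Finset.Ico (4 * k) m, (if i / 4 = k then F (i % 4) else 0) := by
    refine (Finset.sum_subset ?_ ?_).symm
    · intro i hi
      simp only [Finset.mem_Ico] at hi
      simp only [Finset.mem_range]
      omega
    · intro i hi hni
      simp only [Finset.mem_range] at hi
      simp only [Finset.mem_Ico] at hni
      have : ¬ (i / 4 = k) := by omega
      rw [if_neg this]
  have e2 : ∑ i ∈ Finset.Ico (4 * k) m, (if i / 4 = k then F (i % 4) else 0)
      = ∑ j ∈ Finset.range (m - 4 * k), F j := by
    rw [Finset.sum_Ico_eq_sum_range]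
    refine Finset.sum_congr rfl ?_
    intro j hj
    simp only [Finset.mem_range] at hj
    have ha : (4 * k + j) / 4 = k := by omega
    have hb : (4 * k + j) % 4 = j := by omega
    rw [ha, if_pos rfl, hb]
  rw [e1, e2]
  rcases h2 with h2 | ⟨h2, h3⟩
  · have : m - 4 * k = 4 := by omega
    rw [this]
  · have h4 : m - 4 * k = 3 := by omega
    rw [h4, show (∑ j ∈ Finset.range 4, F j) = (∑ j ∈ Finset.range 3, F j) + F 3
      from Finset.sum_range_succ F 3, h3, add_zero]

/-- The vector supported on block `k` with pattern `(z, a, b)`. -/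
def fv (n k : ℕ) (z : Fin 4) (a b : Bool) : Fin n → ℤ :=
  fun i => if (i : ℕ) / 4 = k then w z a b ((i : ℕ) % 4) else 0

def Ok (n k : ℕ) (z : Fin 4) : Prop := 4 * k + 3 ≤ n ∧ (z.val ≠ 3 → 4 * k + 4 ≤ n)

instance (n k : ℕ) (z : Fin 4) : Decidable (Ok n k z) :=
  inferInstanceAs (Decidable (_ ∧ _))

lemma fv_range (n k : ℕ) (z : Fin 4) (a b : Bool) (i : Fin n) :
    fv n k z a b i = -1 ∨ fv n k z a b i = 0 ∨ fv n k z a b i = 1 := by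
  unfold fv
  by_cases hi : (i : ℕ) / 4 = k
  · rw [if_pos hi]; exact wrange z a b _
  · rw [if_neg hi]; right; left; rfl

lemma fv_card (n k : ℕ) (z : Fin 4) (a b : Bool) (h : Ok n k z) :
    (Finset.univ.filter (fun i => fv n k z a b i ≠ 0)).card = 3 := by
  obtain ⟨h1, h2⟩ := h
  rw [Finset.card_filter]
  have e0 : (∑ i : Fin n, if fv n k z a b i ≠ 0 then 1 else 0)
      = ∑ i ∈ Finset.range n,
          (fun m => if (if m / 4 = k then w z a b (m % 4) else 0) ≠ 0 then (1:ℕ) else 0) i :=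
    Fin.sum_univ_eq_sum_range
      (fun m => if (if m / 4 = k then w z a b (m % 4) else 0) ≠ 0 then (1:ℕ) else 0) n
  rw [e0]
  have e1 : ∀ i ∈ Finset.range n,
      (if (if i / 4 = k then w z a b (i % 4) else 0) ≠ 0 then (1:ℕ) else 0)
        = (if i / 4 = k then (if w z a b (i % 4) ≠ 0 then 1 else 0) else 0) := by
    intro i _
    by_cases hi : i / 4 = k <;> simp [hi]
  rw [Finset.sum_congr rfl e1,
    sum_block n k (fun j => if w z a b j ≠ 0 then (1:ℕ) else 0) ?_ h1 ?_]
  · exact wsupp z a b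
  · intro j hj
    show (if w z a b j ≠ 0 then (1:ℕ) else 0) = 0
    rw [w_ge4 z a b j hj]; simp
  · by_cases h4 : 4 * k + 4 ≤ n
    · exact Or.inl h4
    · have hz : z.val = 3 := by by_contra hzz; exact h4 (h2 hzz)
      refine Or.inr ⟨by omega, ?_⟩
      have hz' : z = (3 : Fin 4) := Fin.ext hz
      show (if w z a b 3 ≠ 0 then (1:ℕ) else 0) = 0
      rw [hz', w330]
      simp

def gmk (n k : ℕ) (z : Fin 4) (a b : Bool) (h : Ok n k z) : Gvert n :=
  ⟨fv n k z a b, fv_range n k z a b, fv_card n k z a b h⟩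

lemma dot_ne {n k k' : ℕ} {z z' : Fin 4} {a b a' b' : Bool}
    (h : Ok n k z) (h' : Ok n k' z') :
    (∑ i : Fin n, fv n k z a b i * fv n k' z' a' b' i) ≠ 1 := by
  obtain ⟨hn1, hn2⟩ := h
  obtain ⟨hn1', hn2'⟩ := h'
  by_cases hkk : k = k'
  · subst hkk
    have e0 : (∑ i : Fin n, fv n k z a b i * fv n k z' a' b' i)
        = ∑ i ∈ Finset.range n,
            (fun m => (if m / 4 = k then w z a b (m % 4) else 0)
              * (if m / 4 = k then w z' a' b' (m % 4) else 0)) i :=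
      Fin.sum_univ_eq_sum_range
        (fun m => (if m / 4 = k then w z a b (m % 4) else 0)
          * (if m / 4 = k then w z' a' b' (m % 4) else 0)) n
    have e1 : ∀ i ∈ Finset.range n,
        (if i / 4 = k then w z a b (i % 4) else 0)
            * (if i / 4 = k then w z' a' b' (i % 4) else 0)
          = (if i / 4 = k then w z a b (i % 4) * w z' a' b' (i % 4) else 0) := by
      intro i _
      by_cases hi : i / 4 = k <;> simp [hi]
    rw [e0, Finset.sum_congr rfl e1,
      sum_block n k (fun j => w z a b j * w z' a' b' j) ?_ hn1 ?_]
    · exact wdot z z' a b a' b'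
    · intro j hj
      show w z a b j * w z' a' b' j = 0
      rw [w_ge4 z a b j hj, zero_mul]
    · by_cases h4 : 4 * k + 4 ≤ n
      · exact Or.inl h4
      · have hz : z.val = 3 := by by_contra hzz; exact h4 (hn2 hzz)
        have hz2 : z = (3 : Fin 4) := Fin.ext hz
        refine Or.inr ⟨by omega, ?_⟩
        show w z a b 3 * w z' a' b' 3 = 0
        rw [hz2, w330, zero_mul]
  · have hz : ∀ i : Fin n, fv n k z a b i * fv n k' z' a' b' i = 0 := by
      intro i
      unfold fv
      by_cases h1 : (i : ℕ) / 4 = k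
      · have h2 : ¬((i : ℕ) / 4 = k') := by omega
        rw [if_neg h2, mul_zero]
      · rw [if_neg h1, zero_mul]
    rw [Finset.sum_eq_zero (fun i _ => hz i)]
    decide

lemma fv_inj {n k k' : ℕ} {z z' : Fin 4} {a b a' b' : Bool}
    (h : Ok n k z) (h' : Ok n k' z')
    (he : fv n k z a b = fv n k' z' a' b') :
    k = k' ∧ z = z' ∧ a = a' ∧ b = b' := by
  obtain ⟨hn1, hn2⟩ := h
  obtain ⟨hn1', hn2'⟩ := h'
  have hk : k = k' := by
    by_contra hkk
    obtain ⟨j, hj3, hwj⟩ : ∃ j, j < 3 ∧ w z a b j ≠ 0 := by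
      rcases wnz z a b with hw | hw
      · exact ⟨0, by omega, hw⟩
      · exact ⟨1, by omega, hw⟩
    have := congrFun he ⟨4 * k + j, by omega⟩
    unfold fv at this
    simp only at this
    have ha : (4 * k + j) / 4 = k := by omega
    have hb : (4 * k + j) % 4 = j := by omega
    rw [ha, hb, if_pos rfl, if_neg hkk] at this
    exact hwj this
  subst hk
  have hw : ∀ j, j < 3 → w z a b j = w z' a' b' j := by
    intro j hj
    have := congrFun he ⟨4 * k + j, by omega⟩
    unfold fv at this
    simp only at this
    have ha : (4 * k + j) / 4 = k := by omega
    have hb : (4 * k + j) % 4 = j := by omega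
    rw [ha, hb, if_pos rfl, if_pos rfl] at this
    exact this
  obtain ⟨e1, e2, e3⟩ := winj z z' a b a' b' (hw 0 (by omega)) (hw 1 (by omega)) (hw 2 (by omega))
  exact ⟨rfl, e1, e2, e3⟩


/-- For all `n ≥ 1`, the independence number of `G_n` is at least `4n - 4c(n)`. -/
theorem alpha_ge_quads (n : ℕ) (hn : 1 ≤ n) :
    ∃ S : Finset (Gvert n), IsIndep (G n) ↑S ∧ 4 * n - 4 * c n ≤ S.card := by
  by_cases h3 : n ≤ 2
  · refine ⟨∅, by simp [IsIndep], ?_⟩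
    interval_cases n <;> simp [c]
  push_neg at h3
  have hg3 : Ok n 0 3 := ⟨by omega, fun hh => absurd rfl hh⟩
  set K := n / 4 with hK
  set g : ℕ × Fin 4 × Bool × Bool → Gvert n := fun p =>
    if h : Ok n p.1 p.2.1 then gmk n p.1 p.2.1 p.2.2.1 p.2.2.2 h
    else gmk n 0 3 true true hg3 with hgdef
  set I : Finset (ℕ × Fin 4 × Bool × Bool) :=
    (Finset.range K ×ˢ Finset.univ) ∪
      (if n % 4 = 3 then ({K} : Finset ℕ) ×ˢ (({3} : Finset (Fin 4)) ×ˢ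
          (Finset.univ : Finset (Bool × Bool))) else ∅) with hIdef
  have hI : ∀ p ∈ I, Ok n p.1 p.2.1 := by
    intro p hp
    rw [hIdef, Finset.mem_union] at hp
    rcases hp with hp | hp
    · rw [Finset.mem_product, Finset.mem_range] at hp
      exact ⟨by omega, fun _ => by omega⟩
    · by_cases hc : n % 4 = 3
      · rw [if_pos hc] at hp
        simp only [Finset.mem_product, Finset.mem_singleton, Finset.mem_univ] at hp
        refine ⟨by omega, fun hzz => ?_⟩
        exfalso; apply hzz; rw [hp.2.1]; rfl
      · rw [if_neg hc] at hp
        exact absurd hp (Finset.notMem_empty p)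
  refine ⟨I.image g, ?_, ?_⟩
  · intro u hu v hv _ hadj
    simp only [Finset.coe_image, Set.mem_image, Finset.mem_coe] at hu hv
    obtain ⟨p, hp, rfl⟩ := hu
    obtain ⟨q, hq, rfl⟩ := hv
    have hOp := hI p hp
    have hOq := hI q hq
    have hgp : g p = gmk n p.1 p.2.1 p.2.2.1 p.2.2.2 hOp := dif_pos hOp
    have hgq : g q = gmk n q.1 q.2.1 q.2.2.1 q.2.2.2 hOq := dif_pos hOq
    obtain ⟨-, hdot⟩ := hadj
    rw [hgp, hgq] at hdot
    exact dot_ne hOp hOq hdot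
  · rw [Finset.card_image_of_injOn ?_]
    · have hdisj : Disjoint (Finset.range K ×ˢ (Finset.univ : Finset (Fin 4 × Bool × Bool)))
          (if n % 4 = 3 then ({K} : Finset ℕ) ×ˢ (({3} : Finset (Fin 4)) ×ˢ
              (Finset.univ : Finset (Bool × Bool))) else ∅) := by
        split
        · rw [Finset.disjoint_left]
          intro p hp hq
          rw [Finset.mem_product, Finset.mem_range] at hp
          simp only [Finset.mem_product, Finset.mem_singleton] at hq
          omega
        · exact Finset.disjoint_empty_right _
      have hcard : I.card = 16 * K + (if n % 4 = 3 then 4 else 0) := by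
        rw [hIdef, Finset.card_union_of_disjoint hdisj, Finset.card_product,
          Finset.card_range, Finset.card_univ]
        congr 1
        · simp; ring
        · by_cases hc : n % 4 = 3 <;> simp [hc]
      rw [hcard]
      have hm : n % 4 = 0 ∨ n % 4 = 1 ∨ n % 4 = 2 ∨ n % 4 = 3 := by omega
      rcases hm with hm | hm | hm | hm <;> simp [c, hm] <;> omega
    · intro p hp q hq hgpq
      simp only [Finset.mem_coe] at hp hq
      have hOp := hI p hp
      have hOq := hI q hq
      rw [show g p = gmk n p.1 p.2.1 p.2.2.1 p.2.2.2 hOp from dif_pos hOp,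
        show g q = gmk n q.1 q.2.1 q.2.2.1 q.2.2.2 hOq from dif_pos hOq] at hgpq
      have hfv := congrArg Subtype.val hgpq
      obtain ⟨e1, e2, e3, e4⟩ := fv_inj hOp hOq hfv
      obtain ⟨p1, p2, p3, p4⟩ := p
      obtain ⟨q1, q2, q3, q4⟩ := q
      simp_all
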